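/- Under the hypotheses of the existence theorem for discrete gradient methods (conditions on f̃, ī, ĩ, î, ĭ with constants R, L, H on a bounded set B; R' := max{R, 10L}; H' := min{H, 1/(10L), 1/(6C₂R'), 1/((36C₂+6)L)}), for each x ∈ B with i(x) ≠ 0, each h ∈ [0,H') and all z, z' ∈ B_{R'}(x), the map T(z) := x + h S̃(x,z,h) ī(x,z), with S̃(x,z,h) := (f̃(x,z,h) ĩ(x,z,h)ᵀ − ĩ(x,z,h) f̃(x,z,h)ᵀ)/(î(x,z,h)·ĭ(x,z,h)), satisfies the contraction estimate |T(z) − T(z')| ≤ (36 C₂ + 6) L h |z − z'|, and (36 C₂ + 6) L h < 1. -/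

import Mathlib

open scoped RealInnerProductSpace

noncomputable section

/-- Membership in the ball `B_R(x) = {z : ‖z − x‖ ≤ ‖i x‖ / R}`. -/
def InBall {d : ℕ} (i : EuclideanSpace ℝ (Fin d) → EuclideanSpace ℝ (Fin d)) (R : ℝ)
    (x z : EuclideanSpace ℝ (Fin d)) : Prop :=
  ‖z - x‖ ≤ ‖i x‖ / R

/-- The consistency and local Lipschitz conditions at the point `x` for an approximation
`g(·,·,·)` of `target` (conditions (11z)/(12z) of the paper, with balls measured via `i`). -/
def ConsistAt {d : ℕ} (i target : EuclideanSpace ℝ (Fin d) → EuclideanSpace ℝ (Fin d))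
    (x : EuclideanSpace ℝ (Fin d)) (R L H : ℝ)
    (g : EuclideanSpace ℝ (Fin d) → EuclideanSpace ℝ (Fin d) → ℝ → EuclideanSpace ℝ (Fin d)) :
    Prop :=
  g x x 0 = target x ∧
    ∀ h : ℝ, 0 ≤ h → h < H →
      (∀ u v w, InBall i R x u → InBall i R x v → InBall i R x w →
        ‖g u v h - g w v h‖ ≤ L * ‖u - w‖ ∧ ‖g u v h - g u w h‖ ≤ L * ‖v - w‖) ∧
      ‖g x x h - g x x 0‖ ≤ L * h * ‖i x‖

/-- The discrete gradient step equation `x' = x + h S̃(x,x',h) ī(x,x')`, where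
`S̃ = (f̃ ĩᵀ − ĩ f̃ᵀ)/(î·ĭ)`, so that
`S̃ ī = ((ĩ·ī) f̃ − (f̃·ī) ĩ)/(î·ĭ)`. -/
def DGEq {d : ℕ}
    (ftil itil ihat ibrev :
      EuclideanSpace ℝ (Fin d) → EuclideanSpace ℝ (Fin d) → ℝ → EuclideanSpace ℝ (Fin d))
    (ibar : EuclideanSpace ℝ (Fin d) → EuclideanSpace ℝ (Fin d) → EuclideanSpace ℝ (Fin d))
    (x : EuclideanSpace ℝ (Fin d)) (h : ℝ) (x' : EuclideanSpace ℝ (Fin d)) : Prop :=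
  x' = x + (h / ⟪ihat x x' h, ibrev x x' h⟫) •
    (⟪itil x x' h, ibar x x'⟫ • ftil x x' h - ⟪ftil x x' h, ibar x x'⟫ • itil x x' h)

/-- The map `T(z) := x + h S̃(x,z,h) ī(x,z)` of the contraction argument. -/
def Tmap {d : ℕ}
    (ftil itil ihat ibrev :
      EuclideanSpace ℝ (Fin d) → EuclideanSpace ℝ (Fin d) → ℝ → EuclideanSpace ℝ (Fin d))
    (ibar : EuclideanSpace ℝ (Fin d) → EuclideanSpace ℝ (Fin d) → EuclideanSpace ℝ (Fin d))
    (x z : EuclideanSpace ℝ (Fin d)) (h : ℝ) : EuclideanSpace ℝ (Fin d) :=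
  x + (h / ⟪ihat x z h, ibrev x z h⟫) •
    (⟪itil x z h, ibar x z⟫ • ftil x z h - ⟪ftil x z h, ibar x z⟫ • itil x z h)


section Aux

variable {E : Type*} [NormedAddCommGroup E] [InnerProductSpace ℝ E]

private lemma aux_ipdiff (u u' v v' : E) :
    |⟪u,v⟫ - ⟪u',v'⟫| ≤ ‖u - u'‖*‖v‖ + ‖u'‖*‖v - v'‖ := by
  have e : ⟪u,v⟫ - ⟪u',v'⟫ = ⟪u-u',v⟫ + ⟪u',v-v'⟫ := by
    simp [inner_sub_left, inner_sub_right]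
  rw [e]
  exact le_trans (abs_add_le _ _)
    (add_le_add (abs_real_inner_le_norm _ _) (abs_real_inner_le_norm _ _))

private lemma aux_ipb (ix a b : E) {n : ℝ} (hn : 0 < n) (hn_def : n = ‖ix‖)
    (ha : ‖a - ix‖ ≤ n/5) (hb : ‖b - ix‖ ≤ n/5) : 14/25*n^2 ≤ ⟪a, b⟫ := by
  have hab : ‖a‖ ≤ 6/5*n := by
    have := norm_sub_norm_le a ix
    rw [← hn_def] at this
    linarith
  have e : ⟪a,b⟫ = ⟪ix, ix⟫ + ⟪a - ix, ix⟫ + ⟪a, b - ix⟫ := by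
    simp [inner_sub_left, inner_sub_right]
  have h1' : -(‖a - ix‖ * ‖ix‖) ≤ ⟪a - ix, ix⟫ :=
    neg_le_of_abs_le (abs_real_inner_le_norm _ _)
  have h2' : -(‖a‖ * ‖b - ix‖) ≤ ⟪a, b - ix⟫ :=
    neg_le_of_abs_le (abs_real_inner_le_norm _ _)
  have h3 : ⟪ix, ix⟫ = n^2 := by
    rw [real_inner_self_eq_norm_sq, hn_def]
  have h4 : ‖a - ix‖ * ‖ix‖ ≤ (n/5) * n := by
    rw [← hn_def]
    exact mul_le_mul_of_nonneg_right ha hn.le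
  have h5 : ‖a‖ * ‖b - ix‖ ≤ (6/5*n) * (n/5) :=
    mul_le_mul hab hb (norm_nonneg _) (by positivity)
  rw [e, h3]
  nlinarith

private lemma aux_contraction (h n C₂ ℓ : ℝ) (hh0 : 0 ≤ h) (hn : 0 < n) (hC₂ : 0 < C₂)
    (hℓ0 : 0 ≤ ℓ) (a a' c c' b b' P P' Q Q' : E)
    (hna : ‖a‖ ≤ 6/5*n) (hna' : ‖a'‖ ≤ 6/5*n)
    (hnb : ‖b‖ ≤ 6/5*n) (hnb' : ‖b'‖ ≤ 6/5*n)
    (hnP' : ‖P'‖ ≤ 6/5*n) (hnQ : ‖Q‖ ≤ 6/5*n)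
    (hnc : ‖c‖ ≤ C₂*n) (hnc' : ‖c'‖ ≤ C₂*n)
    (haa' : ‖a - a'‖ ≤ ℓ) (hcc' : ‖c - c'‖ ≤ ℓ) (hbb' : ‖b - b'‖ ≤ ℓ)
    (hPP' : ‖P - P'‖ ≤ ℓ) (hQQ' : ‖Q - Q'‖ ≤ ℓ)
    (hDlb : 14/25*n^2 ≤ ⟪P,Q⟫) (hD'lb : 14/25*n^2 ≤ ⟪P',Q'⟫) :
    ‖(h/⟪P,Q⟫) • (⟪a,b⟫ • c - ⟪c,b⟫ • a)
      - (h/⟪P',Q'⟫) • (⟪a',b'⟫ • c' - ⟪c',b'⟫ • a')‖ ≤ (36*C₂+6) * (h*ℓ) := by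
  set D := ⟪P,Q⟫ with hD_def
  set D' := ⟪P',Q'⟫ with hD'_def
  set N := ⟪a,b⟫ • c - ⟪c,b⟫ • a with hN_def
  set N' := ⟪a',b'⟫ • c' - ⟪c',b'⟫ • a' with hN'_def
  have hDpos : 0 < D := lt_of_lt_of_le (by positivity) hDlb
  have hD'pos : 0 < D' := lt_of_lt_of_le (by positivity) hD'lb
  -- scalar bounds
  have sab : |⟪a,b⟫ - ⟪a',b'⟫| ≤ ℓ*(6/5*n) + (6/5*n)*ℓ :=
    le_trans (aux_ipdiff a a' b b')
      (add_le_add (mul_le_mul haa' hnb (norm_nonneg _) hℓ0)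
        (mul_le_mul hna' hbb' (norm_nonneg _) (by positivity)))
  have scb : |⟪c,b⟫ - ⟪c',b'⟫| ≤ ℓ*(6/5*n) + (C₂*n)*ℓ :=
    le_trans (aux_ipdiff c c' b b')
      (add_le_add (mul_le_mul hcc' hnb (norm_nonneg _) hℓ0)
        (mul_le_mul hnc' hbb' (norm_nonneg _) (by positivity)))
  have sa'b' : |⟪a',b'⟫| ≤ (6/5*n)*(6/5*n) :=
    le_trans (abs_real_inner_le_norm _ _)
      (mul_le_mul hna' hnb' (norm_nonneg _) (by positivity))
  have sc'b' : |⟪c',b'⟫| ≤ (C₂*n)*(6/5*n) :=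
    le_trans (abs_real_inner_le_norm _ _)
      (mul_le_mul hnc' hnb' (norm_nonneg _) (by positivity))
  -- bound on ‖N - N'‖
  have hNsplit : N - N' = (⟪a,b⟫ - ⟪a',b'⟫) • c + ⟪a',b'⟫ • (c - c')
      - ((⟪c,b⟫ - ⟪c',b'⟫) • a + ⟪c',b'⟫ • (a - a')) := by
    rw [hN_def, hN'_def]; module
  have hNd : ‖N - N'‖ ≤ (24/5*C₂ + 72/25)*(n^2*ℓ) := by
    rw [hNsplit]
    calc ‖(⟪a,b⟫ - ⟪a',b'⟫) • c + ⟪a',b'⟫ • (c - c')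
          - ((⟪c,b⟫ - ⟪c',b'⟫) • a + ⟪c',b'⟫ • (a - a'))‖
        ≤ ‖(⟪a,b⟫ - ⟪a',b'⟫) • c + ⟪a',b'⟫ • (c - c')‖
          + ‖(⟪c,b⟫ - ⟪c',b'⟫) • a + ⟪c',b'⟫ • (a - a')‖ := norm_sub_le _ _
      _ ≤ (‖(⟪a,b⟫ - ⟪a',b'⟫) • c‖ + ‖⟪a',b'⟫ • (c - c')‖)
          + (‖(⟪c,b⟫ - ⟪c',b'⟫) • a‖ + ‖⟪c',b'⟫ • (a - a')‖) :=
        add_le_add (norm_add_le _ _) (norm_add_le _ _)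
      _ ≤ ((ℓ*(6/5*n) + (6/5*n)*ℓ)*(C₂*n) + ((6/5*n)*(6/5*n))*ℓ)
          + ((ℓ*(6/5*n) + (C₂*n)*ℓ)*(6/5*n) + ((C₂*n)*(6/5*n))*ℓ) := by
        simp only [norm_smul, Real.norm_eq_abs]
        refine add_le_add (add_le_add ?_ ?_) (add_le_add ?_ ?_)
        · exact mul_le_mul sab hnc (norm_nonneg _) (by positivity)
        · exact mul_le_mul sa'b' hcc' (norm_nonneg _) (by positivity)
        · exact mul_le_mul scb hna (norm_nonneg _) (by positivity)
        · exact mul_le_mul sc'b' haa' (norm_nonneg _) (by positivity)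
      _ = (24/5*C₂ + 72/25)*(n^2*ℓ) := by ring
  -- bound on ‖N'‖
  have hN'b : ‖N'‖ ≤ 72/25*(C₂*n^3) := by
    rw [hN'_def]
    calc ‖⟪a',b'⟫ • c' - ⟪c',b'⟫ • a'‖
        ≤ ‖⟪a',b'⟫ • c'‖ + ‖⟪c',b'⟫ • a'‖ := norm_sub_le _ _
      _ ≤ ((6/5*n)*(6/5*n))*(C₂*n) + ((C₂*n)*(6/5*n))*(6/5*n) := by
        simp only [norm_smul, Real.norm_eq_abs]
        exact add_le_add (mul_le_mul sa'b' hnc' (norm_nonneg _) (by positivity))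
          (mul_le_mul sc'b' hna' (norm_nonneg _) (by positivity))
      _ = 72/25*(C₂*n^3) := by ring
  -- bound on |D - D'|
  have hDd : |D - D'| ≤ 12/5*(n*ℓ) := by
    rw [hD_def, hD'_def]
    refine le_trans (aux_ipdiff P P' Q Q') ?_
    have := add_le_add (mul_le_mul hPP' hnQ (norm_nonneg _) hℓ0)
      (mul_le_mul hnP' hQQ' (norm_nonneg _) (by positivity))
    calc ‖P - P'‖*‖Q‖ + ‖P'‖*‖Q - Q'‖ ≤ ℓ*(6/5*n) + (6/5*n)*ℓ := this
      _ = 12/5*(n*ℓ) := by ring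
  -- final computation
  have e2 : (h/D) • N - (h/D') • N' = (h/D) • (N - N') + (h/D - h/D') • N' := by module
  rw [e2]
  have hdiv : h/D - h/D' = h * (D' - D) / (D * D') := by
    field_simp
  calc ‖(h/D) • (N - N') + (h/D - h/D') • N'‖
      ≤ ‖(h/D) • (N - N')‖ + ‖(h/D - h/D') • N'‖ := norm_add_le _ _
    _ = (h/D) * ‖N - N'‖ + (h * |D - D'| / (D*D')) * ‖N'‖ := by
      rw [norm_smul, norm_smul, Real.norm_eq_abs, Real.norm_eq_abs,
        abs_of_nonneg (div_nonneg hh0 hDpos.le), hdiv, abs_div, abs_mul,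
        abs_of_nonneg hh0, abs_of_pos (mul_pos hDpos hD'pos), abs_sub_comm D' D]
    _ ≤ (h/(14/25*n^2)) * ((24/5*C₂ + 72/25)*(n^2*ℓ))
        + (h * (12/5*(n*ℓ)) / ((14/25*n^2)*(14/25*n^2))) * (72/25*(C₂*n^3)) := by
      gcongr ?_ * ?_ + ?_ * ?_
      · exact div_le_div_of_nonneg_left hh0 (by positivity) hDlb
      · exact div_le_div₀ (by positivity) (mul_le_mul_of_nonneg_left hDd hh0)
          (by positivity) (mul_le_mul hDlb hD'lb (by positivity) hDpos.le)
    _ = ((1500/49)*C₂ + 36/7) * (h*ℓ) := by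
      have hn0 : n ≠ 0 := ne_of_gt hn
      field_simp
      ring
    _ ≤ (36*C₂ + 6) * (h*ℓ) := by
      have hx0 : 0 ≤ h*ℓ := mul_nonneg hh0 hℓ0
      have hx1 : 0 ≤ C₂ * (h*ℓ) := mul_nonneg hC₂.le hx0
      nlinarith

end Aux

/-- The contraction estimate `‖T z − T z′‖ ≤ (36C₂+6)Lh‖z − z′‖ < ‖z − z′‖`. -/
theorem discrete_gradient_Tmap_contraction {d : ℕ}
    (f : EuclideanSpace ℝ (Fin d) → EuclideanSpace ℝ (Fin d))
    (I : EuclideanSpace ℝ (Fin d) → ℝ)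
    (i : EuclideanSpace ℝ (Fin d) → EuclideanSpace ℝ (Fin d))
    (hgrad : ∀ x, HasGradientAt I (i x) x)
    (B : Set (EuclideanSpace ℝ (Fin d))) (hB : Bornology.IsBounded B)
    (C₁ : ℝ) (hC₁ : 0 < C₁) (hfC : ∀ x ∈ B, ‖f x‖ ≤ C₁ * ‖i x‖)
    (R L H : ℝ) (hR : 0 < R) (hL : 0 < L) (hH : 0 < H)
    (ftil itil ihat ibrev :
      EuclideanSpace ℝ (Fin d) → EuclideanSpace ℝ (Fin d) → ℝ → EuclideanSpace ℝ (Fin d))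
    (ibar : EuclideanSpace ℝ (Fin d) → EuclideanSpace ℝ (Fin d) → EuclideanSpace ℝ (Fin d))
    (hftil : ∀ x ∈ B, ConsistAt i f x R L H ftil)
    (hitil : ∀ x ∈ B, ConsistAt i i x R L H itil)
    (hihat : ∀ x ∈ B, ConsistAt i i x R L H ihat)
    (hibrev : ∀ x ∈ B, ConsistAt i i x R L H ibrev)
    (hibar_cont : Continuous (fun q : EuclideanSpace ℝ (Fin d) × EuclideanSpace ℝ (Fin d) =>
      ibar q.1 q.2))
    (hibar_dg : ∀ x x' : EuclideanSpace ℝ (Fin d), ⟪ibar x x', x' - x⟫ = I x' - I x)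
    (hibar_diag : ∀ x : EuclideanSpace ℝ (Fin d), ibar x x = i x)
    (hibar_lip : ∀ x ∈ B, ∀ u v w : EuclideanSpace ℝ (Fin d),
      InBall i R x u → InBall i R x v → InBall i R x w →
      ‖ibar u v - ibar w v‖ ≤ L * ‖u - w‖ ∧ ‖ibar u v - ibar u w‖ ≤ L * ‖v - w‖)
    (R' H' : ℝ) (hR' : R' = max R (10 * L))
    (hH' : H' = min H (min (1 / (10 * L))
      (min (1 / (6 * (C₁ + 1/5) * R')) (1 / ((36 * (C₁ + 1/5) + 6) * L)))))
    (x : EuclideanSpace ℝ (Fin d)) (hxB : x ∈ B) (hix : i x ≠ 0)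
    (h : ℝ) (hh0 : 0 ≤ h) (hhH : h < H')
    (z z' : EuclideanSpace ℝ (Fin d)) (hz : InBall i R' x z) (hz' : InBall i R' x z') :
    ‖Tmap ftil itil ihat ibrev ibar x z h - Tmap ftil itil ihat ibrev ibar x z' h‖ ≤
        (36 * (C₁ + 1/5) + 6) * L * h * ‖z - z'‖ ∧
      (36 * (C₁ + 1/5) + 6) * L * h < 1 := by
  have hC₂ : (0:ℝ) < C₁ + 1/5 := by linarith
  -- size facts about h
  have hhH2 := hhH
  rw [hH'] at hhH2
  have hhHH : h < H := lt_of_lt_of_le hhH2 (min_le_left _ _)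
  have hh10L : h < 1/(10*L) :=
    lt_of_lt_of_le hhH2 (le_trans (min_le_right _ _) (min_le_left _ _))
  have hhfin : h < 1/((36*(C₁+1/5)+6)*L) :=
    lt_of_lt_of_le hhH2 (le_trans (min_le_right _ _)
      (le_trans (min_le_right _ _) (min_le_right _ _)))
  have hKL : (0:ℝ) < (36*(C₁+1/5)+6)*L := by positivity
  have hsecond : (36*(C₁+1/5)+6)*L*h < 1 := by
    have h1 : h * ((36*(C₁+1/5)+6)*L) < 1 := (lt_div_iff₀ hKL).mp hhfin
    have h2 : (36*(C₁+1/5)+6)*L*h = h * ((36*(C₁+1/5)+6)*L) := by ring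
    linarith
  refine ⟨?_, hsecond⟩
  have hn : 0 < ‖i x‖ := norm_pos_iff.mpr hix
  have hRR' : R ≤ R' := by rw [hR']; exact le_max_left _ _
  have hLR' : 10 * L ≤ R' := by rw [hR']; exact le_max_right _ _
  have hR'0 : 0 < R' := lt_of_lt_of_le hR hRR'
  have hLh : L * h ≤ 1/10 := by
    have h10L : (0:ℝ) < 10*L := by linarith
    have := (lt_div_iff₀ h10L).mp hh10L
    nlinarith
  -- ball inclusions
  have hball : ∀ w, InBall i R' x w → InBall i R x w := by
    intro w hw
    have hw' : ‖w - x‖ ≤ ‖i x‖ / R' := hw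
    exact le_trans hw' (div_le_div_of_nonneg_left hn.le hR hRR')
  have hLw : ∀ w, InBall i R' x w → L * ‖w - x‖ ≤ ‖i x‖/10 := by
    intro w hw
    have hw' : ‖w - x‖ ≤ ‖i x‖ / R' := hw
    have h1 : ‖w - x‖ ≤ ‖i x‖ / (10*L) :=
      le_trans hw' (div_le_div_of_nonneg_left hn.le (by linarith) hLR')
    have h2 : L * ‖w - x‖ ≤ L * (‖i x‖/(10*L)) :=
      mul_le_mul_of_nonneg_left h1 hL.le
    have h3 : L * (‖i x‖/(10*L)) = ‖i x‖/10 := by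
      field_simp
    rw [h3] at h2
    exact h2
  have hxball : InBall i R x x := by
    show ‖x - x‖ ≤ ‖i x‖ / R
    rw [sub_self, norm_zero]; positivity
  -- consistency bounds
  have key : ∀ (g : EuclideanSpace ℝ (Fin d) → EuclideanSpace ℝ (Fin d) → ℝ →
        EuclideanSpace ℝ (Fin d)) (t : EuclideanSpace ℝ (Fin d) → EuclideanSpace ℝ (Fin d)),
      ConsistAt i t x R L H g →
      (∀ w, InBall i R' x w → ‖g x w h - t x‖ ≤ ‖i x‖/5) ∧
        ‖g x z h - g x z' h‖ ≤ L * ‖z - z'‖ := by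
    intro g t hg
    obtain ⟨h0, hcon⟩ := hg
    obtain ⟨hlip, hdiag⟩ := hcon h hh0 hhHH
    constructor
    · intro w hw
      have h1 : ‖g x w h - g x x h‖ ≤ L * ‖w - x‖ :=
        (hlip x w x hxball (hball w hw) hxball).2
      have h2 : ‖g x x h - g x x 0‖ ≤ L * h * ‖i x‖ := hdiag
      have h3 : L * h * ‖i x‖ ≤ ‖i x‖/10 := by nlinarith
      have e : g x w h - t x = (g x w h - g x x h) + (g x x h - g x x 0) := by
        rw [h0]; abel
      rw [e]
      calc ‖(g x w h - g x x h) + (g x x h - g x x 0)‖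
          ≤ ‖g x w h - g x x h‖ + ‖g x x h - g x x 0‖ := norm_add_le _ _
        _ ≤ ‖i x‖/10 + ‖i x‖/10 := add_le_add (le_trans h1 (hLw w hw)) (le_trans h2 h3)
        _ = ‖i x‖/5 := by ring
    · exact (hlip x z z' hxball (hball z hz) (hball z' hz')).2
  obtain ⟨hf_b, hf_l⟩ := key ftil f (hftil x hxB)
  obtain ⟨hi1_b, hi1_l⟩ := key itil i (hitil x hxB)
  obtain ⟨hi2_b, hi2_l⟩ := key ihat i (hihat x hxB)
  obtain ⟨hi3_b, hi3_l⟩ := key ibrev i (hibrev x hxB)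
  have hib_b : ∀ w, InBall i R' x w → ‖ibar x w - i x‖ ≤ ‖i x‖/5 := by
    intro w hw
    have h1 : ‖ibar x w - ibar x x‖ ≤ L * ‖w - x‖ :=
      (hibar_lip x hxB x w x hxball (hball w hw) hxball).2
    rw [hibar_diag] at h1
    have := hLw w hw
    linarith
  have hib_l : ‖ibar x z - ibar x z'‖ ≤ L * ‖z - z'‖ :=
    (hibar_lip x hxB x z z' hxball (hball z hz) (hball z' hz')).2
  -- norm bounds
  have nb : ∀ v : EuclideanSpace ℝ (Fin d), ‖v - i x‖ ≤ ‖i x‖/5 → ‖v‖ ≤ 6/5*‖i x‖ := by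
    intro v hv
    have := norm_sub_norm_le v (i x)
    linarith
  have fb : ∀ w, InBall i R' x w → ‖ftil x w h‖ ≤ (C₁+1/5) * ‖i x‖ := by
    intro w hw
    have h1 := hf_b w hw
    have h2 := hfC x hxB
    have h3 := norm_sub_norm_le (ftil x w h) (f x)
    have h4 : (C₁+1/5) * ‖i x‖ = C₁ * ‖i x‖ + 1/5 * ‖i x‖ := by ring
    linarith
  -- structure of the difference
  have hT : Tmap ftil itil ihat ibrev ibar x z h - Tmap ftil itil ihat ibrev ibar x z' h
      = (h / ⟪ihat x z h, ibrev x z h⟫) •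
          (⟪itil x z h, ibar x z⟫ • ftil x z h - ⟪ftil x z h, ibar x z⟫ • itil x z h)
      - (h / ⟪ihat x z' h, ibrev x z' h⟫) •
          (⟪itil x z' h, ibar x z'⟫ • ftil x z' h - ⟪ftil x z' h, ibar x z'⟫ • itil x z' h) := by
    simp only [Tmap]; abel
  have main := aux_contraction h ‖i x‖ (C₁+1/5) (L * ‖z - z'‖) hh0 hn hC₂ (by positivity)
    (itil x z h) (itil x z' h) (ftil x z h) (ftil x z' h) (ibar x z) (ibar x z')
    (ihat x z h) (ihat x z' h) (ibrev x z h) (ibrev x z' h)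
    (nb _ (hi1_b z hz)) (nb _ (hi1_b z' hz'))
    (nb _ (hib_b z hz)) (nb _ (hib_b z' hz'))
    (nb _ (hi2_b z' hz')) (nb _ (hi3_b z hz))
    (fb z hz) (fb z' hz')
    hi1_l hf_l hib_l hi2_l hi3_l
    (aux_ipb (i x) _ _ hn rfl (hi2_b z hz) (hi3_b z hz))
    (aux_ipb (i x) _ _ hn rfl (hi2_b z' hz') (hi3_b z' hz'))
  rw [hT]
  calc ‖(h / ⟪ihat x z h, ibrev x z h⟫) •
          (⟪itil x z h, ibar x z⟫ • ftil x z h - ⟪ftil x z h, ibar x z⟫ • itil x z h)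
      - (h / ⟪ihat x z' h, ibrev x z' h⟫) •
          (⟪itil x z' h, ibar x z'⟫ • ftil x z' h - ⟪ftil x z' h, ibar x z'⟫ • itil x z' h)‖
      ≤ (36*(C₁+1/5)+6) * (h*(L * ‖z - z'‖)) := main
    _ = (36*(C₁+1/5)+6)*L*h*‖z - z'‖ := by ring
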